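/- arXiv:1106.1098 — 4 statements merged into one kernel-verified Lean document; each statement's English description precedes it below -/
import Mathlib

section
/- If G is a finitely presented group, i.e. G ≅ F/R with F a finitely generated free group and R the normal closure of a finite set, then the group (R ∩ [F,F])/[R,F] (the Schur multiplier via the Hopf formula) is a finitely generated abelian group. -/
/-- A subgroup contained in a finitely generated subgroup whose elements commute is
finitely generated. -/
lemma my_fg_of_le_comm {G : Type*} [Group G] {H K : Subgroup G} (hKH : K ≤ H)
    (hH : H.FG) (hcomm : ∀ a b : ↥H, a * b = b * a) : Group.FG ↥K := by
  letI : CommGroup ↥H := { (inferInstance : Group ↥H) with mul_comm := hcomm }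
  haveI : Group.FG ↥H := (Group.fg_iff_subgroup_fg H).2 hH
  haveI : AddGroup.FG (Additive ↥H) := GroupFG.iff_add_fg.1 ‹_›
  haveI : Module.Finite ℤ (Additive ↥H) := Module.Finite.iff_addGroup_fg.2 ‹_›
  haveI : IsNoetherian ℤ (Additive ↥H) := isNoetherian_of_isNoetherianRing_of_finite ℤ _
  set K' := K.subgroupOf H with hK'
  have h1 : (AddSubgroup.toIntSubmodule (Subgroup.toAddSubgroup K')).FG :=
    IsNoetherian.noetherian _
  have h2 : K'.FG := by
    rw [Subgroup.fg_iff_add_fg]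
    rwa [Submodule.fg_iff_addSubgroup_fg] at h1
  haveI : Group.FG ↥K' := (Group.fg_iff_subgroup_fg K').2 h2
  exact Group.fg_of_surjective (f := (Subgroup.subgroupOfEquivOfLe hKH).toMonoidHom)
    (Subgroup.subgroupOfEquivOfLe hKH).surjective

/-- If `G ≅ F/R` is finitely presented (`F` a finitely generated free group, `R` the
normal closure of a finite set), then the Hopf-formula Schur multiplier
`(R ∩ [F,F])/[R,F]` is a finitely generated abelian group. -/
theorem schur_stmt2 (n : ℕ) (S : Finset (FreeGroup (Fin n)))
    (R : Subgroup (FreeGroup (Fin n))) [R.Normal]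
    (hR : R = Subgroup.normalClosure (S : Set (FreeGroup (Fin n)))) :
    Group.FG ↥((R ⊓ commutator (FreeGroup (Fin n))).map
        (QuotientGroup.mk' ⁅R, (⊤ : Subgroup (FreeGroup (Fin n)))⁆)) ∧
      ∀ a b : ↥((R ⊓ commutator (FreeGroup (Fin n))).map
          (QuotientGroup.mk' ⁅R, (⊤ : Subgroup (FreeGroup (Fin n)))⁆)),
        a * b = b * a := by
  set C : Subgroup (FreeGroup (Fin n)) := ⁅R, (⊤ : Subgroup (FreeGroup (Fin n)))⁆ with hC
  -- every image of an element of `R` is central in the quotient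
  have hcen : ∀ r ∈ R, QuotientGroup.mk' C r ∈ Subgroup.center (FreeGroup (Fin n) ⧸ C) := by
    intro r hr
    rw [Subgroup.mem_center_iff]
    intro g
    obtain ⟨f, rfl⟩ := QuotientGroup.mk'_surjective C g
    rw [← map_mul, ← map_mul, QuotientGroup.mk'_eq_mk']
    open scoped commutatorElement in
    refine ⟨⁅r⁻¹, f⁻¹⁆,
      Subgroup.commutator_mem_commutator (inv_mem hr) (Subgroup.mem_top _), ?_⟩
    simp only [commutatorElement_def]
    group
  have hHle : R.map (QuotientGroup.mk' C) ≤ Subgroup.center (FreeGroup (Fin n) ⧸ C) := by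
    rintro _ ⟨r, hr, rfl⟩
    exact hcen r hr
  have hcomm : ∀ a b : ↥(R.map (QuotientGroup.mk' C)), a * b = b * a := by
    intro a b
    exact Subtype.ext (Subgroup.mem_center_iff.1 (hHle b.2) a)
  -- `R.map π` is finitely generated
  have hclosle : Subgroup.closure (QuotientGroup.mk' C '' (S : Set (FreeGroup (Fin n)))) ≤
      Subgroup.center (FreeGroup (Fin n) ⧸ C) := by
    rw [Subgroup.closure_le]
    rintro _ ⟨s, hs, rfl⟩
    exact hcen s (by rw [hR]; exact Subgroup.subset_normalClosure hs)
  haveI hnor : (Subgroup.closure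
      (QuotientGroup.mk' C '' (S : Set (FreeGroup (Fin n))))).Normal := by
    constructor
    intro x hx g
    have hxg := Subgroup.mem_center_iff.1 (hclosle hx) g
    have hgx : g * x * g⁻¹ = x := by rw [hxg]; group
    rwa [hgx]
  have hHeq : R.map (QuotientGroup.mk' C) =
      Subgroup.closure (QuotientGroup.mk' C '' (S : Set (FreeGroup (Fin n)))) := by
    have h := Subgroup.map_normalClosure (S : Set (FreeGroup (Fin n)))
      (QuotientGroup.mk' C) (QuotientGroup.mk'_surjective C)
    rw [← hR] at h
    exact h.trans (le_antisymm (Subgroup.normalClosure_le_normal Subgroup.subset_closure)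
      Subgroup.closure_le_normalClosure)
  have hHfg : (R.map (QuotientGroup.mk' C)).FG :=
    (Subgroup.fg_iff _).2 ⟨_, hHeq.symm, S.finite_toSet.image _⟩
  -- the target subgroup is contained in `R.map π`
  have hKH : (R ⊓ commutator (FreeGroup (Fin n))).map (QuotientGroup.mk' C) ≤
      R.map (QuotientGroup.mk' C) := Subgroup.map_mono inf_le_left
  constructor
  · exact my_fg_of_le_comm hKH hHfg hcomm
  · intro a b
    exact Subtype.ext (Subgroup.mem_center_iff.1 (hHle (hKH b.2)) a)
end

section
/- With φ_c : (R ∩ F')/[R,F] → (Rγ_cF ∩ F')/[Rγ_cF,F] as above, the kernel of φ_c equals ((R ∩ [R,F]γ_{c+1}F))/[R,F], i.e., the image of (R ∩ γ_{c+1}F)[R,F]/[R,F]. -/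
open Subgroup Pointwise
open scoped commutatorElement

lemma commutator_sup_top_aux {F : Type} [Group F] (R K : Subgroup F) [R.Normal] [K.Normal] :
    ⁅R ⊔ K, (⊤ : Subgroup F)⁆ = ⁅R, (⊤ : Subgroup F)⁆ ⊔ ⁅K, (⊤ : Subgroup F)⁆ := by
  refine le_antisymm ?_ (sup_le (Subgroup.commutator_mono le_sup_left le_rfl)
    (Subgroup.commutator_mono le_sup_right le_rfl))
  rw [Subgroup.commutator_le]
  intro g hg t _
  have hg' : g ∈ ((R : Set F) * (K : Set F)) := by
    rw [← Subgroup.mul_normal R K]; exact_mod_cast hg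
  obtain ⟨r, hr, k, hk, rfl⟩ := hg'
  have key : ⁅r * k, t⁆ = r * ⁅k, t⁆ * r⁻¹ * ⁅r, t⁆ := by
    simp only [commutatorElement_def]; group
  rw [key]
  have h1 : r * ⁅k, t⁆ * r⁻¹ ∈ ⁅K, (⊤ : Subgroup F)⁆ :=
    (Subgroup.commutator_normal K ⊤).conj_mem _ (Subgroup.commutator_mem_commutator hk trivial) r
  exact mul_mem (Subgroup.mem_sup_right h1)
    (Subgroup.mem_sup_left (Subgroup.commutator_mem_commutator hr trivial))

/-- The kernel of `φ_c : (R ∩ F')/[R,F] → (Rγ_cF ∩ F')/[Rγ_cF,F]` equals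
`(R ∩ [R,F]γ_{c+1}F)/[R,F]`. -/
theorem schur_stmt12 (F : Type) [Group F] (R : Subgroup F) [R.Normal] (c : ℕ)
    (φ : (↥(R ⊓ commutator F) ⧸
            ((⁅R, (⊤ : Subgroup F)⁆).subgroupOf (R ⊓ commutator F))) →*
          (↥((R ⊔ (⊤ : Subgroup F).lowerCentralSeries c) ⊓ commutator F) ⧸
            ((⁅R ⊔ (⊤ : Subgroup F).lowerCentralSeries c, (⊤ : Subgroup F)⁆).subgroupOf
              ((R ⊔ (⊤ : Subgroup F).lowerCentralSeries c) ⊓ commutator F))))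
    (hφ : ∀ (g : F) (h1 : g ∈ R ⊓ commutator F)
        (h2 : g ∈ (R ⊔ (⊤ : Subgroup F).lowerCentralSeries c) ⊓ commutator F),
        φ (QuotientGroup.mk ⟨g, h1⟩) = QuotientGroup.mk ⟨g, h2⟩) :
    φ.ker = Subgroup.map
        (QuotientGroup.mk' ((⁅R, (⊤ : Subgroup F)⁆).subgroupOf (R ⊓ commutator F)))
        ((R ⊓ (⁅R, (⊤ : Subgroup F)⁆ ⊔ (⊤ : Subgroup F).lowerCentralSeries (c + 1))).subgroupOf
          (R ⊓ commutator F)) := by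
  have hcomm : ⁅R ⊔ (⊤ : Subgroup F).lowerCentralSeries c, (⊤ : Subgroup F)⁆
      = ⁅R, (⊤ : Subgroup F)⁆ ⊔ (⊤ : Subgroup F).lowerCentralSeries (c + 1) :=
    commutator_sup_top_aux R ((⊤ : Subgroup F).lowerCentralSeries c)
  set N := (⁅R, (⊤ : Subgroup F)⁆).subgroupOf (R ⊓ commutator F) with hN
  set S := ((R ⊓ (⁅R, (⊤ : Subgroup F)⁆ ⊔ (⊤ : Subgroup F).lowerCentralSeries (c + 1))).subgroupOf
      (R ⊓ commutator F)) with hS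
  have hNS : N ≤ S := by
    intro x hx
    rw [hS, Subgroup.mem_subgroupOf]
    exact ⟨x.2.1, Subgroup.mem_sup_left (by rwa [hN, Subgroup.mem_subgroupOf] at hx)⟩
  ext x
  induction x using QuotientGroup.induction_on with
  | H z =>
    obtain ⟨g, h1⟩ := z
    have h2 : g ∈ (R ⊔ (⊤ : Subgroup F).lowerCentralSeries c) ⊓ commutator F :=
      ⟨Subgroup.mem_sup_left h1.1, h1.2⟩
    constructor
    · intro hx
      rw [MonoidHom.mem_ker, hφ g h1 h2, QuotientGroup.eq_one_iff,
        Subgroup.mem_subgroupOf] at hx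
      simp only [hcomm] at hx
      refine ⟨⟨g, h1⟩, ?_, rfl⟩
      show (⟨g, h1⟩ : ↥(R ⊓ _root_.commutator F)) ∈ S
      rw [hS, Subgroup.mem_subgroupOf]
      exact ⟨h1.1, hx⟩
    · rintro ⟨y, hy, hxy⟩
      have hn : y⁻¹ * ⟨g, h1⟩ ∈ N := QuotientGroup.eq.mp hxy
      have hmem : (⟨g, h1⟩ : ↥(R ⊓ _root_.commutator F)) ∈ S := by
        have := mul_mem hy (hNS hn)
        simpa using this
      rw [hS, Subgroup.mem_subgroupOf] at hmem
      rw [MonoidHom.mem_ker, hφ g h1 h2, QuotientGroup.eq_one_iff,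
        Subgroup.mem_subgroupOf]
      rw [hcomm]; exact hmem.2
end

section
/- Let F be a free group with quotient map π: F → F/[R,F], and suppose R is the normal closure of a set S ⊆ F such that S = S_0 ∪ S_1 with S_0 ⊆ F' and the images {π(s) : s ∈ S_1} generating a free abelian complement to (R∩F')/[R,F] in R/[R,F]. Then (R∩F')/[R,F] is generated by {π(s) : s ∈ S_0}. -/
open scoped Pointwise
open scoped commutatorElement


/-- If `R` is the normal closure of `S = S₀ ∪ S₁` with `S₀ ⊆ F'` and the images of `S₁`
generate a free abelian complement to `(R∩F')/[R,F]` in `R/[R,F]`, then `(R∩F')/[R,F]`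
is generated by the images of `S₀`. -/
theorem schur_stmt16 (n : ℕ) (S S0 S1 : Set (FreeGroup (Fin n)))
    (hS : S = S0 ∪ S1)
    (R : Subgroup (FreeGroup (Fin n))) [R.Normal]
    (hR : R = Subgroup.normalClosure S)
    (hS0 : S0 ⊆ ↑(commutator (FreeGroup (Fin n))))
    (hsup : ((R ⊓ commutator (FreeGroup (Fin n))).map
          (QuotientGroup.mk' ⁅R, (⊤ : Subgroup (FreeGroup (Fin n)))⁆)) ⊔
        Subgroup.closure ((QuotientGroup.mk' ⁅R, (⊤ : Subgroup (FreeGroup (Fin n)))⁆) '' S1) =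
        R.map (QuotientGroup.mk' ⁅R, (⊤ : Subgroup (FreeGroup (Fin n)))⁆))
    (hinf : ((R ⊓ commutator (FreeGroup (Fin n))).map
          (QuotientGroup.mk' ⁅R, (⊤ : Subgroup (FreeGroup (Fin n)))⁆)) ⊓
        Subgroup.closure ((QuotientGroup.mk' ⁅R, (⊤ : Subgroup (FreeGroup (Fin n)))⁆) '' S1) = ⊥)
    (hfree : ∃ ι : Type, Nonempty
        (↥(Subgroup.closure ((QuotientGroup.mk' ⁅R, (⊤ : Subgroup (FreeGroup (Fin n)))⁆) '' S1)) ≃*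
          Multiplicative (ι →₀ ℤ))) :
    (R ⊓ commutator (FreeGroup (Fin n))).map
        (QuotientGroup.mk' ⁅R, (⊤ : Subgroup (FreeGroup (Fin n)))⁆) =
      Subgroup.closure ((QuotientGroup.mk' ⁅R, (⊤ : Subgroup (FreeGroup (Fin n)))⁆) '' S0) := by
  set π := QuotientGroup.mk' ⁅R, (⊤ : Subgroup (FreeGroup (Fin n)))⁆ with hπ
  set A := (R ⊓ commutator (FreeGroup (Fin n))).map π with hA
  set B := Subgroup.closure (π '' S1) with hB
  set C := Subgroup.closure (π '' S0) with hC
  -- π of R is central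
  have hcent : ∀ g ∈ R, π g ∈ Subgroup.center (FreeGroup (Fin n) ⧸ ⁅R, ⊤⁆) := by
    intro g hg
    rw [Subgroup.mem_center_iff]
    intro q
    obtain ⟨y, rfl⟩ := QuotientGroup.mk'_surjective _ q
    rw [← map_mul, ← map_mul, hπ, QuotientGroup.mk'_apply, QuotientGroup.mk'_apply]
    refine (QuotientGroup.eq ).mpr ?_
    have : (y * g)⁻¹ * (g * y) = ⁅g⁻¹, y⁻¹⁆ := by group
    rw [this]
    exact Subgroup.commutator_mem_commutator (R.inv_mem hg) (Subgroup.mem_top _)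
  -- C ≤ A
  have hCA : C ≤ A := by
    rw [hC, Subgroup.closure_le]
    rintro _ ⟨s, hs, rfl⟩
    exact ⟨s, ⟨hR ▸ Subgroup.subset_normalClosure (hS ▸ Or.inl hs), hS0 hs⟩, rfl⟩
  -- map π R = C ⊔ B
  have hmap : R.map π = C ⊔ B := by
    rw [congrArg (Subgroup.map π) hR,
      Subgroup.map_normalClosure _ _ (QuotientGroup.mk'_surjective _)]
    have hnorm : (Subgroup.closure (π '' S)).Normal := by
      constructor
      intro h hm g
      have hc : h ∈ Subgroup.center (FreeGroup (Fin n) ⧸ ⁅R, ⊤⁆) := by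
        refine Subgroup.closure_le (Subgroup.center _) |>.mpr ?_ hm
        rintro _ ⟨s, hs, rfl⟩
        exact hcent s (hR ▸ Subgroup.subset_normalClosure hs)
      rw [Subgroup.mem_center_iff.mp hc g, mul_assoc, mul_inv_cancel, mul_one]
      exact hm
    have : Subgroup.normalClosure (π '' S) = Subgroup.closure (π '' S) :=
      le_antisymm (Subgroup.normalClosure_le_normal Subgroup.subset_closure)
        (Subgroup.closure_le _ |>.mpr Subgroup.subset_normalClosure)
    rw [this, hS, Set.image_union, Subgroup.closure_union]
  -- A ≤ C ⊔ B
  have hACB : A ≤ C ⊔ B := by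
    rw [← hmap]
    exact le_trans (Subgroup.map_mono inf_le_left) (le_of_eq rfl)
  -- C is normal
  have hCnorm : C.Normal := by
    constructor
    intro h hm g
    have hc : h ∈ Subgroup.center (FreeGroup (Fin n) ⧸ ⁅R, ⊤⁆) := by
      refine Subgroup.closure_le (Subgroup.center _) |>.mpr ?_ hm
      rintro _ ⟨s, hs, rfl⟩
      exact hcent s (hR ▸ Subgroup.subset_normalClosure (hS ▸ Or.inl hs))
    rw [Subgroup.mem_center_iff.mp hc g, mul_assoc, mul_inv_cancel, mul_one]
    exact hm
  refine le_antisymm ?_ hCA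
  intro a ha
  have hmem : a ∈ ((C : Set (FreeGroup (Fin n) ⧸ ⁅R, (⊤ : Subgroup (FreeGroup (Fin n)))⁆)) * (B : Set (FreeGroup (Fin n) ⧸ ⁅R, (⊤ : Subgroup (FreeGroup (Fin n)))⁆))) := by
    rw [← Subgroup.normal_mul C B]; exact hACB ha
  obtain ⟨c, hc, b, hb, rfl⟩ := hmem
  have hbA : b ∈ A := by
    have : c⁻¹ * (c * b) ∈ A := A.mul_mem (A.inv_mem (hCA hc)) ha
    simpa using this
  have hb1 : b = 1 := by
    have : b ∈ A ⊓ B := ⟨hbA, hb⟩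
    rw [hinf] at this
    exact this
  subst hb1
  simpa using hc
end

section
/- Let F be a group, R ⊴ F. Then (R ∩ F')·[Rγ_cF,F]/[Rγ_cF,F] = (Rγ_{c+1}F ∩ F')/[Rγ_cF,F], where F' = [F,F] and γ_cF is the lower central series. -/
open scoped Pointwise


/-- `(R ∩ F')·[Rγ_cF,F]/[Rγ_cF,F] = (Rγ_{c+1}F ∩ F')/[Rγ_cF,F]`, as subgroups of
`F/[Rγ_cF,F]`. -/
theorem schur_stmt19 (F : Type) [Group F] (R : Subgroup F) [R.Normal] (c : ℕ) :
    (R ⊓ commutator F).map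
        (QuotientGroup.mk' ⁅R ⊔ (⊤ : Subgroup F).lowerCentralSeries c, (⊤ : Subgroup F)⁆) =
      ((R ⊔ (⊤ : Subgroup F).lowerCentralSeries (c + 1)) ⊓ commutator F).map
        (QuotientGroup.mk' ⁅R ⊔ (⊤ : Subgroup F).lowerCentralSeries c, (⊤ : Subgroup F)⁆) := by
  set N : Subgroup F := ⁅R ⊔ (⊤ : Subgroup F).lowerCentralSeries c, (⊤ : Subgroup F)⁆ with hN
  have hNF' : N ≤ commutator F := Subgroup.commutator_mono le_top le_top
  have hsucc : (⊤ : Subgroup F).lowerCentralSeries (c + 1) ≤ N := by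
    rw [lowerCentralSeries_succ]
    exact Subgroup.commutator_mono le_sup_right le_rfl
  apply le_antisymm
  · exact Subgroup.map_mono (inf_le_inf_right _ le_sup_left)
  · rw [Subgroup.map_le_iff_le_comap, Subgroup.comap_map_eq, QuotientGroup.ker_mk', ← hN]
    rintro x ⟨hx1, hx2⟩
    have hx1' : x ∈ R ⊔ N := sup_le_sup_left hsucc R hx1
    have hx1'' : x ∈ (↑(R ⊔ N) : Set F) := hx1'
    rw [Subgroup.mul_normal] at hx1''
    obtain ⟨r, hr, n, hn, rfl⟩ := hx1''
    have hr' : r ∈ commutator F := by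
      have : r = r * n * n⁻¹ := by group
      rw [this]
      exact mul_mem hx2 (inv_mem (hNF' hn))
    exact mul_mem (Subgroup.mem_sup_left ⟨hr, hr'⟩) (Subgroup.mem_sup_right hn)
end
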